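/- For every real a with 0 < a < 6^{1/3}, the limit inferior, as n → ∞, of (ln f(n)) / (n^{1/3}·ln n) is at least a/3; equivalently, f(n) ≥ exp((a/3 + o(1))·n^{1/3}·ln n) as n → ∞. -/

import Mathlib

open Filter Real

/-- A Wilf partition: the multiplicities of distinct parts are all different. -/
def IsWilf {n : ℕ} (P : n.Partition) : Prop :=
  ∀ p ∈ P.parts, ∀ q ∈ P.parts,
    Multiset.count p P.parts = Multiset.count q P.parts → p = q

/-- `wilfCount n` is the number of Wilf partitions of `n`. -/
noncomputable def wilfCount (n : ℕ) : ℕ :=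
  Nat.card {P : n.Partition // IsWilf P}

section Aux
open Finset

section A1
variable {n K : ℕ} {G : Type} [Fintype G]

/-- multiset of parts built from a multiplicity function on [2,K] plus
    `n - total` copies of the part 1. -/
def wparts (n K : ℕ) (c : ℕ → ℕ) : Multiset ℕ :=
  Multiset.replicate (n - ∑ i ∈ Finset.Icc 2 K, i * c i) 1
    + ∑ i ∈ Finset.Icc 2 K, Multiset.replicate (c i) i

lemma wparts_count (n K : ℕ) (c : ℕ → ℕ) (x : ℕ) :
    Multiset.count x (wparts n K c) =
      (if x = 1 then n - ∑ i ∈ Finset.Icc 2 K, i * c i else 0)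
        + (if x ∈ Finset.Icc 2 K then c x else 0) := by
  unfold wparts
  rw [Multiset.count_add, Multiset.count_replicate, Multiset.count_sum']
  congr 1
  · by_cases h : x = 1
    · simp [h]
    · rw [if_neg h, if_neg (fun hh : 1 = x => h hh.symm)]
  · rw [← Finset.sum_ite_eq' (Finset.Icc 2 K) x c]
    apply Finset.sum_congr rfl
    intro i _
    rw [Multiset.count_replicate]

lemma wparts_sum (n K : ℕ) (c : ℕ → ℕ)
    (h : (∑ i ∈ Finset.Icc 2 K, i * c i) ≤ n) :
    (wparts n K c).sum = n := by
  unfold wparts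
  rw [Multiset.sum_add, Multiset.sum_replicate, smul_eq_mul, mul_one]
  have : (∑ i ∈ Finset.Icc 2 K, Multiset.replicate (c i) i).sum
      = ∑ i ∈ Finset.Icc 2 K, i * c i := by
    rw [Multiset.sum_sum]
    apply Finset.sum_congr rfl
    intro i _
    rw [Multiset.sum_replicate, smul_eq_mul, mul_comm]
  rw [this]
  omega

lemma wparts_pos (n K : ℕ) (c : ℕ → ℕ) {x : ℕ} (hx : x ∈ wparts n K c) : 0 < x := by
  unfold wparts at hx
  rw [Multiset.mem_add] at hx
  rcases hx with hx | hx
  · rw [Multiset.eq_of_mem_replicate hx]; norm_num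
  · rw [Multiset.mem_sum] at hx
    obtain ⟨i, hi, hxi⟩ := hx
    rw [Multiset.eq_of_mem_replicate hxi]
    have := (Finset.mem_Icc.1 hi).1; omega

end A1

lemma wilf_card_ge (n K : ℕ) (G : Type) [Fintype G] (c : G → ℕ → ℕ)
    (hval : ∀ g, ∀ i ∈ Finset.Icc 2 K, 1 ≤ c g i ∧ c g i ≤ K)
    (hinj : ∀ g, ∀ i ∈ Finset.Icc 2 K, ∀ j ∈ Finset.Icc 2 K, c g i = c g j → i = j)
    (hsum : ∀ g, (∑ i ∈ Finset.Icc 2 K, i * c g i) + K + 1 ≤ n)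
    (hfam : ∀ g g', (∀ i ∈ Finset.Icc 2 K, c g i = c g' i) → g = g') :
    Fintype.card G ≤ wilfCount n := by
  -- basic facts
  have hsum' : ∀ g, (∑ i ∈ Finset.Icc 2 K, i * c g i) ≤ n := fun g => by
    have := hsum g; omega
  have hbig : ∀ g, K + 1 ≤ n - ∑ i ∈ Finset.Icc 2 K, i * c g i := fun g => by
    have := hsum g; omega
  -- counts
  have hc1 : ∀ g, Multiset.count 1 (wparts n K (c g))
      = n - ∑ i ∈ Finset.Icc 2 K, i * c g i := by
    intro g
    rw [wparts_count]
    have : (1:ℕ) ∉ Finset.Icc 2 K := by simp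
    simp [this]
  have hci : ∀ g, ∀ i ∈ Finset.Icc 2 K, Multiset.count i (wparts n K (c g)) = c g i := by
    intro g i hi
    rw [wparts_count]
    have h1 : i ≠ 1 := by have := (Finset.mem_Icc.1 hi).1; omega
    simp [h1, hi]
  have hmem : ∀ g x, x ∈ wparts n K (c g) ↔ (x = 1 ∨ x ∈ Finset.Icc 2 K) := by
    intro g x
    rw [← Multiset.count_pos, wparts_count]
    constructor
    · intro h
      by_contra hc
      push_neg at hc
      simp [hc.1, hc.2] at h
    · intro h
      rcases h with h | h
      · subst h
        have := hbig g
        have h2 : (1:ℕ) ∉ Finset.Icc 2 K := by simp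
        simp [h2]; omega
      · have := (hval g x h).1
        simp [h]; omega
  -- the partition
  have hP : ∀ g : G, ∃ P : n.Partition, P.parts = wparts n K (c g) := by
    intro g
    exact ⟨⟨wparts n K (c g), fun {x} hx => wparts_pos n K (c g) hx,
      wparts_sum n K (c g) (hsum' g)⟩, rfl⟩
  choose P hPdef using hP
  have hwilf : ∀ g, IsWilf (P g) := by
    intro g p hp q hq hpq
    rw [hPdef] at hp hq hpq
    rw [hmem] at hp hq
    rcases hp with hp | hp <;> rcases hq with hq | hq
    · omega
    · exfalso
      subst hp
      rw [hc1 g, hci g q hq] at hpq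
      have := hbig g
      have := (hval g q hq).2
      omega
    · exfalso
      subst hq
      rw [hci g p hp, hc1 g] at hpq
      have := hbig g
      have := (hval g p hp).2
      omega
    · rw [hci g p hp, hci g q hq] at hpq
      exact hinj g p hp q hq hpq
  have hinjP : Function.Injective (fun g => (⟨P g, hwilf g⟩ : {P : n.Partition // IsWilf P})) := by
    intro g g' h
    simp only [Subtype.mk.injEq] at h
    apply hfam
    intro i hi
    rw [← hci g i hi, ← hci g' i hi, ← hPdef, ← hPdef, h]
  have := Nat.card_le_card_of_injective _ hinjP
  rwa [Nat.card_eq_fintype_card] at this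

lemma sum_id (K w : ℕ) :
    6 * ∑ i ∈ Finset.range (K+1), i * (K + w + 1 - i)
      = K*(K+1)*(K+2) + 3*w*K*(K+1) := by
  induction K with
  | zero => simp
  | succ K IH =>
      have step : ∑ i ∈ Finset.range (K+2), i * (K + 1 + w + 1 - i)
          = ∑ i ∈ Finset.range (K+1), i * (K + w + 1 - i)
            + (K+1)*w + ∑ i ∈ Finset.range (K+2), i := by
        rw [Finset.sum_range_succ]
        have congrsum : ∑ i ∈ Finset.range (K+1), i * (K + 1 + w + 1 - i)
            = ∑ i ∈ Finset.range (K+1), (i * (K + w + 1 - i) + i) := by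
          apply Finset.sum_congr rfl
          intro i hi
          have hi' : i ≤ K := by simpa [Nat.lt_succ_iff] using hi
          have h1 : K + 1 + w + 1 - i = (K + w + 1 - i) + 1 := by omega
          rw [h1, Nat.mul_add, Nat.mul_one]
        rw [congrsum, Finset.sum_add_distrib]
        have h2 : (K+1) * (K + 1 + w + 1 - (K+1)) = (K+1) * (w+1) := by
          congr 1; omega
        rw [h2, Finset.sum_range_succ (f := fun i => i) (n := K+1)]
        ring
      calc 6 * ∑ i ∈ Finset.range (K+1+1), i * (K + 1 + w + 1 - i)
          = 6 * ∑ i ∈ Finset.range (K+1), i * (K + w + 1 - i)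
            + 6*((K+1)*w) + 3*((∑ i ∈ Finset.range (K+2), i) * 2) := by rw [step]; ring
        _ = K*(K+1)*(K+2) + 3*w*K*(K+1) + 6*((K+1)*w) + 3*((K+2)*(K+2-1)) := by
            rw [IH, Finset.sum_range_id_mul_two]
        _ = (K+1)*(K+1+1)*(K+1+2) + 3*w*(K+1)*(K+1+1) := by
            have : K+2-1 = K+1 := by omega
            rw [this]; ring

def tauF (q w : ℕ) (hw : 0 < w) (f : Fin q → Equiv.Perm (Fin w)) (j : ℕ) : ℕ :=
  if h : j < q * w then
    w * (j / w) + ((f ⟨j / w, (Nat.div_lt_iff_lt_mul hw).2 h⟩) ⟨j % w, Nat.mod_lt _ hw⟩ : Fin w).val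
  else 0

lemma tau_block {q w : ℕ} (hw : 0 < w) (f : Fin q → Equiv.Perm (Fin w))
    (t : Fin q) (r : Fin w) :
    tauF q w hw f (w * t.val + r.val) = w * t.val + ((f t) r).val := by
  have h : w * t.val + r.val < q * w := by
    calc w * t.val + r.val < w * t.val + w := by omega
      _ = w * (t.val + 1) := by ring
      _ ≤ w * q := Nat.mul_le_mul_left w t.isLt
      _ = q * w := Nat.mul_comm w q
  have e1 : (w * t.val + r.val) / w = t.val := by
    rw [Nat.mul_add_div hw, Nat.div_eq_of_lt r.isLt, Nat.add_zero]
  have e2 : (w * t.val + r.val) % w = r.val := by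
    rw [Nat.mul_add_mod, Nat.mod_eq_of_lt r.isLt]
  unfold tauF
  rw [dif_pos h]
  simp only [e1, e2, Fin.eta]

lemma tauF_lt {q w : ℕ} (hw : 0 < w) (f : Fin q → Equiv.Perm (Fin w)) {j : ℕ}
    (h : j < q * w) : tauF q w hw f j < q * w := by
  unfold tauF
  rw [dif_pos h]
  have h1 : j / w < q := (Nat.div_lt_iff_lt_mul hw).2 h
  have h2 : ((f ⟨j / w, (Nat.div_lt_iff_lt_mul hw).2 h⟩) ⟨j % w, Nat.mod_lt _ hw⟩ : Fin w).val < w :=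
    Fin.isLt _
  calc w * (j / w) + _ < w * (j / w) + w := by omega
    _ = w * (j / w + 1) := by ring
    _ ≤ w * q := Nat.mul_le_mul_left w h1
    _ = q * w := Nat.mul_comm w q

lemma tauF_ge {q w : ℕ} (hw : 0 < w) (f : Fin q → Equiv.Perm (Fin w)) {j : ℕ}
    (h : j < q * w) : j < tauF q w hw f j + w := by
  unfold tauF
  rw [dif_pos h]
  have := Nat.div_add_mod j w
  have h2 : j % w < w := Nat.mod_lt _ hw
  omega

lemma tauF_inj {q w : ℕ} (hw : 0 < w) (f : Fin q → Equiv.Perm (Fin w)) {j j' : ℕ}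
    (h : j < q * w) (h' : j' < q * w)
    (heq : tauF q w hw f j = tauF q w hw f j') : j = j' := by
  have e1 := Nat.div_add_mod j w
  have e1' := Nat.div_add_mod j' w
  have hjw : j % w < w := Nat.mod_lt _ hw
  have hjw' : j' % w < w := Nat.mod_lt _ hw
  set t : Fin q := ⟨j / w, (Nat.div_lt_iff_lt_mul hw).2 h⟩
  set r : Fin w := ⟨j % w, hjw⟩
  set t' : Fin q := ⟨j' / w, (Nat.div_lt_iff_lt_mul hw).2 h'⟩
  set r' : Fin w := ⟨j' % w, hjw'⟩
  have hj : j = w * t.val + r.val := by simp [t, r]; omega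
  have hj' : j' = w * t'.val + r'.val := by simp [t', r']; omega
  rw [hj, hj', tau_block hw f t r, tau_block hw f t' r'] at heq
  have hv : ((f t) r).val < w := Fin.isLt _
  have hv' : ((f t') r').val < w := Fin.isLt _
  -- deduce t = t'
  have ht : t.val = t'.val := by
    have d1 : (w * t.val + ((f t) r).val) / w = t.val := by
      rw [Nat.mul_add_div hw, Nat.div_eq_of_lt hv, Nat.add_zero]
    have d2 : (w * t'.val + ((f t') r').val) / w = t'.val := by
      rw [Nat.mul_add_div hw, Nat.div_eq_of_lt hv', Nat.add_zero]
    rw [← d1, ← d2, heq]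
  have htt : t = t' := Fin.ext ht
  rw [htt] at heq
  have hval : ((f t') r).val = ((f t') r').val := Nat.add_left_cancel heq
  have hrr : r = r' := (f t').injective (Fin.ext hval)
  rw [hj, hj', ht, hrr]

lemma wilf_ge_perm (n q w : ℕ) (hw : 0 < w) (hq : 0 < q)
    (hari : (q*w+1)*(q*w+2)*(q*w+3) + 3*w*(q*w+1)*(q*w+2) + 6*(q*w+1) + 12 ≤ 6*n) :
    w.factorial ^ q ≤ wilfCount n := by
  set K := q*w + 1 with hK
  have hjlt : ∀ i ∈ Finset.Icc 2 K, i - 2 < q * w := by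
    intro i hi
    have := Finset.mem_Icc.1 hi
    omega
  set c : (Fin q → Equiv.Perm (Fin w)) → ℕ → ℕ :=
    fun f i => K - tauF q w hw f (i - 2) with hc
  have key := wilf_card_ge n K (Fin q → Equiv.Perm (Fin w)) c ?hval ?hinj ?hsum ?hfam
  case hval =>
    intro f i hi
    have h1 := tauF_lt hw f (hjlt i hi)
    simp only [hc]
    constructor <;> omega
  case hinj =>
    intro f i hi j hj hij
    have h1 := tauF_lt hw f (hjlt i hi)
    have h2 := tauF_lt hw f (hjlt j hj)
    have h3 : tauF q w hw f (i-2) = tauF q w hw f (j-2) := by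
      simp only [hc] at hij
      omega
    have := tauF_inj hw f (hjlt i hi) (hjlt j hj) h3
    have hi2 := (Finset.mem_Icc.1 hi).1
    have hj2 := (Finset.mem_Icc.1 hj).1
    omega
  case hsum =>
    intro f
    have hterm : ∀ i ∈ Finset.Icc 2 K, i * c f i ≤ i * (K + w + 1 - i) := by
      intro i hi
      apply Nat.mul_le_mul_left
      have h1 := tauF_ge hw f (hjlt i hi)
      have h2 := tauF_lt hw f (hjlt i hi)
      have := Finset.mem_Icc.1 hi
      simp only [hc]
      omega
    have hsub : (∑ i ∈ Finset.Icc 2 K, i * c f i)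
        ≤ ∑ i ∈ Finset.range (K+1), i * (K + w + 1 - i) := by
      calc (∑ i ∈ Finset.Icc 2 K, i * c f i)
          ≤ ∑ i ∈ Finset.Icc 2 K, i * (K + w + 1 - i) := Finset.sum_le_sum hterm
        _ ≤ ∑ i ∈ Finset.range (K+1), i * (K + w + 1 - i) := by
            apply Finset.sum_le_sum_of_subset
            intro x hx
            have := Finset.mem_Icc.1 hx
            simp only [Finset.mem_range]
            omega
    have hid := sum_id K w
    have e2 : q*w+2 = K+1 := by omega
    have e3 : q*w+3 = K+2 := by omega
    rw [e2, e3] at hari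
    -- 6 * bound
    have h6 : 6 * (∑ i ∈ Finset.Icc 2 K, i * c f i) + 6*K + 6 ≤ 6 * n := by
      have : 6 * (∑ i ∈ Finset.Icc 2 K, i * c f i)
          ≤ K*(K+1)*(K+2) + 3*w*K*(K+1) := by
        rw [← hid]; omega
      omega
    omega
  case hfam =>
    intro f f' hff
    funext t
    apply Equiv.ext
    intro r
    have hjq : w * t.val + r.val < q * w := by
      calc w * t.val + r.val < w * t.val + w := by omega
        _ = w * (t.val + 1) := by ring
        _ ≤ w * q := Nat.mul_le_mul_left w t.isLt
        _ = q * w := Nat.mul_comm w q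
    set j := w * t.val + r.val with hj
    have hiK : j + 2 ∈ Finset.Icc 2 K := by
      rw [Finset.mem_Icc]
      omega
    have := hff (j + 2) hiK
    simp only [hc, Nat.add_sub_cancel] at this
    have h1 := tauF_lt hw f hjq
    have h2 := tauF_lt hw f' hjq
    have htau : tauF q w hw f j = tauF q w hw f' j := by omega
    rw [hj, tau_block hw f t r, tau_block hw f' t r] at htau
    have := Nat.add_left_cancel htau
    exact Fin.ext this
  calc w.factorial ^ q
      = Fintype.card (Fin q → Equiv.Perm (Fin w)) := by
        rw [Fintype.card_fun, Fintype.card_perm, Fintype.card_fin, Fintype.card_fin]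
  _ ≤ wilfCount n := key

lemma card_mul_le_twice_sum (S : Finset ℕ) (h0 : 0 ∉ S) :
    S.card * (S.card + 1) ≤ 2 * ∑ x ∈ S, x := by
  induction S using Finset.strongInductionOn with
  | _ S IH =>
    rcases S.eq_empty_or_nonempty with rfl | hne
    · simp
    · have hmax : S.max' hne ∈ S := S.max'_mem hne
      have hsub : S ⊆ Finset.Icc 1 (S.max' hne) := by
        intro x hx
        rw [Finset.mem_Icc]
        constructor
        · rcases Nat.eq_zero_or_pos x with rfl | h
          · exact absurd hx h0
          · exact h
        · exact S.le_max' x hx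
      have hcard : S.card ≤ S.max' hne := by
        have := Finset.card_le_card hsub
        simpa [Nat.card_Icc] using this
      have h0' : 0 ∉ S.erase (S.max' hne) := fun h => h0 (Finset.mem_of_mem_erase h)
      have IH' := IH (S.erase (S.max' hne)) (Finset.erase_ssubset hmax) h0'
      have hce : (S.erase (S.max' hne)).card + 1 = S.card := Finset.card_erase_add_one hmax
      have hse : (∑ x ∈ S.erase (S.max' hne), x) + S.max' hne = ∑ x ∈ S, x :=
        Finset.sum_erase_add S _ hmax
      have key : S.card * (S.card + 1)
          = (S.erase (S.max' hne)).card * ((S.erase (S.max' hne)).card + 1)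
            + 2*((S.erase (S.max' hne)).card + 1) := by
        rw [← hce]; ring
      omega

lemma parts_sum_eq (n : ℕ) (P : n.Partition) :
    ∑ b ∈ P.parts.toFinset, b * Multiset.count b P.parts = n := by
  have h := congrArg Multiset.sum (Multiset.toFinset_sum_count_nsmul_eq P.parts)
  rw [Multiset.sum_sum] at h
  calc ∑ b ∈ P.parts.toFinset, b * Multiset.count b P.parts
      = ∑ b ∈ P.parts.toFinset, (Multiset.count b P.parts • ({b} : Multiset ℕ)).sum := by
        apply Finset.sum_congr rfl
        intro b _
        rw [Multiset.nsmul_singleton, Multiset.sum_replicate, smul_eq_mul]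
        ring
    _ = P.parts.sum := h
    _ = n := P.parts_sum

lemma wilf_cube_bound (n : ℕ) (P : n.Partition) (hW : IsWilf P) :
    P.parts.toFinset.card ^ 3 ≤ 16 * n := by
  classical
  set D := P.parts.toFinset with hD
  set k := D.card with hk
  set h := (k + 1) / 2 with hh
  set S := D.filter (fun b => h ≤ Multiset.count b P.parts) with hS
  -- bound on the complement
  have hcompl : (D.filter (fun b => ¬ h ≤ Multiset.count b P.parts)).card ≤ h - 1 := by
    have : (D.filter (fun b => ¬ h ≤ Multiset.count b P.parts)).card
        ≤ (Finset.Icc 1 (h-1)).card := by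
      apply Finset.card_le_card_of_injOn (fun b => Multiset.count b P.parts)
      · intro b hb
        rw [Finset.mem_coe, Finset.mem_filter] at hb
        have hbD : b ∈ P.parts := Multiset.mem_toFinset.1 hb.1
        have : 0 < Multiset.count b P.parts := Multiset.count_pos.2 hbD
        rw [Finset.mem_coe, Finset.mem_Icc]
        beta_reduce
        omega
      · intro b hb b' hb' hcnt
        rw [Finset.mem_coe, Finset.mem_filter] at hb hb'
        exact hW b (Multiset.mem_toFinset.1 hb.1) b' (Multiset.mem_toFinset.1 hb'.1) hcnt
    simpa [Nat.card_Icc] using this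
  have hScard : k ≤ S.card + (h - 1) := by
    have hsplit := Finset.card_filter_add_card_filter_not
      (s := D) (p := fun b => h ≤ Multiset.count b P.parts)
    rw [← hS] at hsplit
    omega
  -- sum bound
  have hn : h * ∑ b ∈ S, b ≤ n := by
    rw [← parts_sum_eq n P]
    calc h * ∑ b ∈ S, b = ∑ b ∈ S, h * b := by rw [Finset.mul_sum]
      _ ≤ ∑ b ∈ S, b * Multiset.count b P.parts := by
          apply Finset.sum_le_sum
          intro b hb
          rw [hS, Finset.mem_filter] at hb
          calc h * b = b * h := Nat.mul_comm _ _
            _ ≤ b * Multiset.count b P.parts := Nat.mul_le_mul_left b hb.2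
      _ ≤ ∑ b ∈ D, b * Multiset.count b P.parts := by
          apply Finset.sum_le_sum_of_subset
          exact Finset.filter_subset _ _
  have h0S : 0 ∉ S := by
    intro h0
    rw [hS, Finset.mem_filter] at h0
    have : (0:ℕ) ∈ P.parts := Multiset.mem_toFinset.1 h0.1
    exact absurd (P.parts_pos this) (lt_irrefl 0)
  have hB1 := card_mul_le_twice_sum S h0S
  -- assemble:  k ≤ 2h, k ≤ 2 S.card, h * S.card * (S.card+1) ≤ 2n
  have hk2h : k ≤ 2 * h := by omega
  have hk2S : k ≤ 2 * S.card := by omega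
  have hfin : h * (S.card * (S.card + 1)) ≤ 2 * n := by
    calc h * (S.card * (S.card + 1)) ≤ h * (2 * ∑ x ∈ S, x) := Nat.mul_le_mul_left h hB1
      _ = 2 * (h * ∑ x ∈ S, x) := by ring
      _ ≤ 2 * n := Nat.mul_le_mul_left 2 hn
  calc k ^ 3 = k * k * k := by ring
    _ ≤ (2*h) * (2*S.card) * (2*S.card) := by
        exact Nat.mul_le_mul (Nat.mul_le_mul hk2h hk2S) hk2S
    _ = 8 * (h * (S.card * S.card)) := by ring
    _ ≤ 8 * (h * (S.card * (S.card + 1))) := by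
        apply Nat.mul_le_mul_left 8
        apply Nat.mul_le_mul_left h
        exact Nat.mul_le_mul_left _ (Nat.le_succ _)
    _ ≤ 8 * (2 * n) := Nat.mul_le_mul_left 8 hfin
    _ = 16 * n := by ring

lemma part_le (n : ℕ) (P : n.Partition) {b : ℕ} (hb : b ∈ P.parts) : b ≤ n := by
  have := Multiset.single_le_sum (fun x (_ : x ∈ P.parts) => Nat.zero_le x) b hb
  rwa [P.parts_sum] at this

lemma count_le (n : ℕ) (P : n.Partition) (b : ℕ) : Multiset.count b P.parts ≤ n := by
  rcases Nat.eq_zero_or_pos (Multiset.count b P.parts) with h | h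
  · omega
  · have hb : b ∈ P.parts := Multiset.count_pos.1 h
    have hb1 : 1 ≤ b := P.parts_pos hb
    have hle : Multiset.replicate (Multiset.count b P.parts) b ≤ P.parts :=
      Multiset.le_count_iff_replicate_le.1 (le_refl _)
    set cnt := Multiset.count b P.parts with hcnt
    obtain ⟨u, hu⟩ := Multiset.le_iff_exists_add.1 hle
    have hs : n = cnt * b + u.sum := by
      rw [← P.parts_sum, hu, Multiset.sum_add, Multiset.sum_replicate, smul_eq_mul]
    have h2 : cnt ≤ cnt * b := Nat.le_mul_of_pos_right _ hb1
    omega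

lemma wilf_upper (n K : ℕ) (hn : 1 ≤ n)
    (hK : ∀ k : ℕ, k ^ 3 ≤ 16 * n → k ≤ K) :
    wilfCount n ≤ (K + 1) * ((n+1)^2) ^ K := by
  classical
  set N := (n+1)^2 with hN
  set F := (Finset.range N).powerset.filter (fun s => s.card ≤ K) with hF
  -- injection into F
  have hinj : ∃ f : {P : n.Partition // IsWilf P} → {s // s ∈ F}, Function.Injective f := by
    refine ⟨fun ⟨P, hP⟩ => ⟨P.parts.toFinset.image (fun b => b + (n+1) * Multiset.count b P.parts), ?_⟩, ?_⟩
    · rw [hF, Finset.mem_filter, Finset.mem_powerset]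
      constructor
      · intro x hx
        rw [Finset.mem_image] at hx
        obtain ⟨b, hb, rfl⟩ := hx
        have hb' : b ∈ P.parts := Multiset.mem_toFinset.1 hb
        have h1 : b ≤ n := part_le n P hb'
        have h2 : Multiset.count b P.parts ≤ n := count_le n P b
        rw [Finset.mem_range, hN]
        nlinarith
      · calc (P.parts.toFinset.image _).card ≤ P.parts.toFinset.card := Finset.card_image_le
          _ ≤ K := by
            apply hK
            exact wilf_cube_bound n P hP
    · rintro ⟨P, hP⟩ ⟨Q, hQ⟩ hPQ
      simp only [Subtype.mk.injEq] at hPQ ⊢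
      -- count functions agree
      have hcnt : ∀ x, Multiset.count x P.parts = Multiset.count x Q.parts := by
        have key : ∀ (A B : n.Partition), A.parts.toFinset.image (fun b => b + (n+1) * Multiset.count b A.parts) = B.parts.toFinset.image (fun b => b + (n+1) * Multiset.count b B.parts) → ∀ x, x ∈ A.parts → Multiset.count x A.parts = Multiset.count x B.parts := by
          intro A B hAB x hx
          have hxim : x + (n+1) * Multiset.count x A.parts ∈ B.parts.toFinset.image (fun b => b + (n+1) * Multiset.count b B.parts) := by
            rw [← hAB, Finset.mem_image]
            exact ⟨x, Multiset.mem_toFinset.2 hx, rfl⟩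
          rw [Finset.mem_image] at hxim
          obtain ⟨y, hy, hxy⟩ := hxim
          have hyB : y ∈ B.parts := Multiset.mem_toFinset.1 hy
          have h1 : x ≤ n := part_le n A hx
          have h2 : y ≤ n := part_le n B hyB
          have hmod := congrArg (· % (n+1)) hxy
          simp only [Nat.add_mul_mod_self_left,
            Nat.mod_eq_of_lt (show y < n+1 by omega),
            Nat.mod_eq_of_lt (show x < n+1 by omega)] at hmod
          have hyx : y = x := hmod
          subst hyx
          have hceq : (n+1) * Multiset.count y B.parts = (n+1) * Multiset.count y A.parts := by
            omega
          have := Nat.eq_of_mul_eq_mul_left (show 0 < n+1 by omega) hceq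
          omega
        intro x
        rcases Nat.eq_zero_or_pos (Multiset.count x P.parts) with h | h
        · rcases Nat.eq_zero_or_pos (Multiset.count x Q.parts) with h' | h'
          · omega
          · have := key Q P hPQ.symm x (Multiset.count_pos.1 h')
            omega
        · exact key P Q hPQ x (Multiset.count_pos.1 h)
      apply Nat.Partition.ext
      exact Multiset.ext.2 hcnt
  obtain ⟨f, hf⟩ := hinj
  have h1 : wilfCount n ≤ F.card := by
    have := Nat.card_le_card_of_injective f hf
    rwa [Nat.card_eq_fintype_card (α := {s // s ∈ F}), Fintype.card_coe] at this
  -- F.card bound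
  have h2 : F ⊆ (Finset.range (K+1)).biUnion (fun j => Finset.powersetCard j (Finset.range N)) := by
    intro s hs
    rw [hF, Finset.mem_filter, Finset.mem_powerset] at hs
    rw [Finset.mem_biUnion]
    exact ⟨s.card, Finset.mem_range.2 (by omega), Finset.mem_powersetCard.2 ⟨hs.1, rfl⟩⟩
  have h3 : F.card ≤ (K+1) * N ^ K := by
    calc F.card ≤ ((Finset.range (K+1)).biUnion (fun j => Finset.powersetCard j (Finset.range N))).card :=
          Finset.card_le_card h2
      _ ≤ ∑ j ∈ Finset.range (K+1), (Finset.powersetCard j (Finset.range N)).card :=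
          Finset.card_biUnion_le
      _ ≤ ∑ j ∈ Finset.range (K+1), N ^ K := by
          apply Finset.sum_le_sum
          intro j hj
          rw [Finset.card_powersetCard, Finset.card_range]
          have hjK : j ≤ K := by
            have := Finset.mem_range.1 hj; omega
          calc N.choose j ≤ N ^ j := Nat.choose_le_pow N j
            _ ≤ N ^ K := Nat.pow_le_pow_right (by positivity) hjK
      _ = (K+1) * N ^ K := by rw [Finset.sum_const, Finset.card_range, smul_eq_mul]
  omega

noncomputable def yf (n : ℕ) : ℝ := (n:ℝ) ^ ((1:ℝ)/3)

lemma yf_tendsto : Tendsto yf atTop atTop :=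
  (tendsto_rpow_atTop (by norm_num : (0:ℝ) < 1/3)).comp tendsto_natCast_atTop_atTop

lemma yf_pos {n : ℕ} (hn : 1 ≤ n) : 0 < yf n := by
  apply Real.rpow_pos_of_pos
  exact_mod_cast hn

lemma yf_cube {n : ℕ} : yf n ^ (3:ℕ) = (n:ℝ) := by
  rw [yf, ← Real.rpow_natCast ((n:ℝ) ^ ((1:ℝ)/3)) 3, ← Real.rpow_mul (by positivity)]
  norm_num

lemma logn_tendsto : Tendsto (fun n : ℕ => Real.log n) atTop atTop :=
  Real.tendsto_log_atTop.comp tendsto_natCast_atTop_atTop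

lemma floor_ratio (c : ℝ) (hc : 0 < c) :
    Tendsto (fun n : ℕ => ((⌊c * yf n⌋₊ : ℕ) : ℝ) / yf n) atTop (nhds c) := by
  have hylarge : ∀ᶠ n : ℕ in atTop, 1 ≤ yf n := yf_tendsto.eventually_ge_atTop 1
  refine tendsto_of_tendsto_of_tendsto_of_le_of_le'
      (g := fun n : ℕ => c - 1 / yf n) (h := fun _ => c) ?_ ?_ ?_ ?_
  · have h0 : Tendsto (fun n : ℕ => 1 / yf n) atTop (nhds 0) :=
      tendsto_const_nhds.div_atTop yf_tendsto
    have hcc : Tendsto (fun _ : ℕ => c) atTop (nhds c) := tendsto_const_nhds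
    have := hcc.sub h0
    simpa using this
  · exact tendsto_const_nhds
  · filter_upwards [hylarge] with n hy
    have hy0 : 0 < yf n := by linarith
    have h1 : c * yf n - 1 ≤ (⌊c * yf n⌋₊ : ℝ) := le_of_lt (Nat.sub_one_lt_floor _)
    rw [sub_le_iff_le_add, div_add' _ _ _ (ne_of_gt hy0), le_div_iff₀ hy0]
    have hone : (1 / yf n) * yf n = 1 := by field_simp
    nlinarith [h1, hone]
  · filter_upwards [hylarge] with n hy
    have hy0 : 0 < yf n := by linarith
    rw [div_le_iff₀ hy0]
    exact Nat.floor_le (by positivity)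

lemma floor_ge_one (c : ℝ) (hc : 0 < c) :
    ∀ᶠ n : ℕ in atTop, 1 ≤ ⌊c * yf n⌋₊ := by
  have : Tendsto (fun n : ℕ => c * yf n) atTop atTop := yf_tendsto.const_mul_atTop hc
  filter_upwards [this.eventually_ge_atTop 1] with n hn
  exact Nat.le_floor (by exact_mod_cast hn)

lemma log_floor_ratio (c : ℝ) (hc : 0 < c) :
    Tendsto (fun n : ℕ => Real.log ((⌊c * yf n⌋₊ : ℕ) : ℝ) / Real.log n)
      atTop (nhds (1/3)) := by
  have key : Tendsto (fun n : ℕ =>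
      Real.log (((⌊c * yf n⌋₊ : ℕ) : ℝ) / yf n) / Real.log n + 1/3)
      atTop (nhds (0 + 1/3)) := by
    apply Tendsto.add _ tendsto_const_nhds
    exact ((floor_ratio c hc).log (ne_of_gt hc)).div_atTop logn_tendsto
  rw [zero_add] at key
  apply key.congr'
  filter_upwards [floor_ge_one c hc, eventually_ge_atTop 2] with n h1 h2
  have hy0 : 0 < yf n := yf_pos (by omega)
  have hF0 : (0:ℝ) < ((⌊c * yf n⌋₊ : ℕ) : ℝ) := by exact_mod_cast h1
  have hlogy : Real.log (yf n) = (1/3) * Real.log n := by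
    rw [yf, Real.log_rpow (by exact_mod_cast (by omega : 0 < n))]
  have hlogn0 : Real.log n ≠ 0 := by
    have : (1:ℝ) < (n:ℝ) := by exact_mod_cast (by omega : 1 < n)
    exact ne_of_gt (Real.log_pos this)
  rw [Real.log_div (ne_of_gt hF0) (ne_of_gt hy0), hlogy]
  field_simp
  ring

lemma log_succ_ratio : Tendsto (fun n : ℕ => Real.log ((n:ℝ)+1) / Real.log n)
    atTop (nhds 1) := by
  have key : Tendsto (fun n : ℕ =>
      Real.log (((n:ℝ)+1) / n) / Real.log n + 1) atTop (nhds (0 + 1)) := by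
    apply Tendsto.add _ tendsto_const_nhds
    have hr : Tendsto (fun n : ℕ => ((n:ℝ)+1)/n) atTop (nhds 1) := by
      have := tendsto_one_div_atTop_nhds_zero_nat (𝕜 := ℝ)
      have hcc : Tendsto (fun _ : ℕ => (1:ℝ)) atTop (nhds 1) := tendsto_const_nhds
      have h2 := hcc.add this
      rw [add_zero] at h2
      apply h2.congr'
      filter_upwards [eventually_ge_atTop 1] with n hn
      have : (0:ℝ) < n := by exact_mod_cast hn
      field_simp
    exact (hr.log one_ne_zero).div_atTop logn_tendsto
  rw [zero_add] at key
  apply key.congr'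
  filter_upwards [eventually_ge_atTop 2] with n h2
  have hn0 : (0:ℝ) < n := by exact_mod_cast (by omega : 0 < n)
  have hlogn0 : Real.log n ≠ 0 := by
    have : (1:ℝ) < (n:ℝ) := by exact_mod_cast (by omega : 1 < n)
    exact ne_of_gt (Real.log_pos this)
  rw [Real.log_div (by positivity) (ne_of_gt hn0)]
  field_simp
  ring

lemma pow_sub_le_factorial (m : ℕ) : ∀ w : ℕ, m ≤ w → m ^ (w - m) ≤ w.factorial := by
  intro w
  induction w with
  | zero => intro h; simp [Nat.le_zero.1 h]
  | succ w IH =>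
      intro h
      rcases Nat.lt_or_ge m (w+1) with hlt | hge
      · have hmw : m ≤ w := by omega
        have h1 : w + 1 - m = (w - m) + 1 := by omega
        rw [h1, pow_succ, Nat.factorial_succ]
        calc m ^ (w-m) * m ≤ w.factorial * (w+1) :=
              Nat.mul_le_mul (IH hmw) (by omega)
          _ = (w+1) * w.factorial := Nat.mul_comm _ _
      · have : m = w + 1 := by omega
        subst this
        simp [Nat.sub_self]
        exact Nat.one_le_iff_ne_zero.2 (Nat.factorial_ne_zero _)

lemma exists_params (a : ℝ) (ha0 : 0 < a) (ha : a < (6:ℝ) ^ ((1:ℝ)/3)) :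
    ∃ (q : ℕ) (γ : ℝ), 1 ≤ q ∧ 0 < γ ∧ a < (q:ℝ) * γ ∧
      ((q:ℝ) * γ)^(3:ℕ) * (((q:ℝ)+3)/q) < 6 := by
  have ha3 : a ^ (3:ℕ) < 6 := by
    have h1 : a ^ (3:ℕ) < ((6:ℝ) ^ ((1:ℝ)/3)) ^ (3:ℕ) :=
      pow_lt_pow_left₀ ha (le_of_lt ha0) (by norm_num)
    have h2 : ((6:ℝ) ^ ((1:ℝ)/3)) ^ (3:ℕ) = 6 := by
      rw [← Real.rpow_natCast ((6:ℝ) ^ ((1:ℝ)/3)) 3, ← Real.rpow_mul (by norm_num)]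
      norm_num
    linarith
  set q : ℕ := ⌈3 * a^(3:ℕ) / (6 - a^(3:ℕ))⌉₊ + 1 with hqdef
  have hq1 : 1 ≤ q := by omega
  have hqpos : (0:ℝ) < (q:ℝ) := by positivity
  have hqgt : 3 * a^(3:ℕ) / (6 - a^(3:ℕ)) < (q:ℝ) := by
    have := Nat.le_ceil (3 * a^(3:ℕ) / (6 - a^(3:ℕ)))
    have hcast : ((⌈3 * a^(3:ℕ) / (6 - a^(3:ℕ))⌉₊ : ℕ) : ℝ) + 1 = (q:ℝ) := by
      rw [hqdef]; push_cast; ring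
    linarith
  have hYpos : (0:ℝ) < 6 * q / (q + 3) := by positivity
  have haY : a ^ (3:ℕ) < 6 * q / (q + 3) := by
    rw [div_lt_iff₀ (by linarith : (0:ℝ) < 6 - a^(3:ℕ))] at hqgt
    rw [lt_div_iff₀ (by positivity : (0:ℝ) < (q:ℝ) + 3)]
    nlinarith
  set X := (6 * (q:ℝ) / (q + 3)) ^ ((1:ℝ)/3) with hX
  have hXpos : 0 < X := Real.rpow_pos_of_pos hYpos _
  have hX3 : X ^ (3:ℕ) = 6 * (q:ℝ) / (q + 3) := by
    rw [hX, ← Real.rpow_natCast ((6 * (q:ℝ) / (q + 3)) ^ ((1:ℝ)/3)) 3,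
      ← Real.rpow_mul (le_of_lt hYpos)]
    norm_num
  have haX : a < X := by
    by_contra hcon
    push_neg at hcon
    have : X ^ (3:ℕ) ≤ a ^ (3:ℕ) := pow_le_pow_left₀ (le_of_lt hXpos) hcon _
    rw [hX3] at this
    linarith
  refine ⟨q, (a + X)/(2*q), hq1, by positivity, ?_, ?_⟩
  · have : (q:ℝ) * ((a + X)/(2*q)) = (a+X)/2 := by field_simp
    rw [this]
    linarith
  · have hM : (q:ℝ) * ((a + X)/(2*q)) = (a+X)/2 := by field_simp
    rw [hM]
    have hMX : (a+X)/2 < X := by linarith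
    have hM0 : 0 ≤ (a+X)/2 := by linarith
    have h3 : ((a+X)/2) ^ (3:ℕ) < X ^ (3:ℕ) := pow_lt_pow_left₀ hMX hM0 (by norm_num)
    rw [hX3] at h3
    have hfrac : (0:ℝ) < ((q:ℝ)+3)/q := by positivity
    calc ((a+X)/2) ^ (3:ℕ) * (((q:ℝ)+3)/q)
        < (6 * (q:ℝ) / (q + 3)) * (((q:ℝ)+3)/q) := by
          exact mul_lt_mul_of_pos_right h3 hfrac
      _ = 6 := by field_simp

lemma clubs (q : ℕ) (γ : ℝ) (hq1 : 1 ≤ q) (hγ0 : 0 < γ)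
    (h6 : ((q:ℝ)*γ)^(3:ℕ) * (((q:ℝ)+3)/q) < 6) :
    ∀ᶠ n : ℕ in atTop,
      (q*⌊γ * yf n⌋₊+1)*(q*⌊γ * yf n⌋₊+2)*(q*⌊γ * yf n⌋₊+3)
        + 3*⌊γ * yf n⌋₊*(q*⌊γ * yf n⌋₊+1)*(q*⌊γ * yf n⌋₊+2)
        + 6*(q*⌊γ * yf n⌋₊+1) + 12 ≤ 6*n := by
  have hqR : (0:ℝ) < (q:ℝ) := by exact_mod_cast hq1
  set c : ℝ := (q:ℝ)*γ with hc
  have hc0 : 0 < c := by positivity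
  have hlim : c^(3:ℕ) + 3*γ*c^(2:ℕ) < 6 := by
    have : c^(3:ℕ) * (((q:ℝ)+3)/q) = c^(3:ℕ) + 3*γ*c^(2:ℕ) := by
      rw [hc]; field_simp
    linarith [h6, this.symm.le]
  -- the ratio function tends to the limit
  have hratio : Tendsto (fun z : ℝ =>
      (c + 1/z)*(c + 2/z)*(c + 3/z) + 3*γ*((c + 1/z)*(c + 2/z))
        + 6*c*(1/z)^(2:ℕ) + 18*(1/z)^(3:ℕ)) atTop
      (nhds (c^(3:ℕ) + 3*γ*c^(2:ℕ))) := by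
    have hz : Tendsto (fun z : ℝ => 1/z) atTop (nhds 0) := by
      simpa using tendsto_inv_atTop_zero
    have h1 : Tendsto (fun z : ℝ => c + 1/z) atTop (nhds c) := by
      simpa using tendsto_const_nhds.add hz
    have h2 : Tendsto (fun z : ℝ => c + 2/z) atTop (nhds c) := by
      have : Tendsto (fun z : ℝ => 2/z) atTop (nhds 0) := by
        have := hz.const_mul (2:ℝ); simpa [div_eq_mul_inv, one_div] using this
      simpa using tendsto_const_nhds.add this
    have h3 : Tendsto (fun z : ℝ => c + 3/z) atTop (nhds c) := by
      have : Tendsto (fun z : ℝ => 3/z) atTop (nhds 0) := by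
        have := hz.const_mul (3:ℝ); simpa [div_eq_mul_inv, one_div] using this
      simpa using tendsto_const_nhds.add this
    have hA : Tendsto (fun z : ℝ => (c + 1/z)*(c + 2/z)*(c + 3/z)) atTop
        (nhds (c*c*c)) := (h1.mul h2).mul h3
    have hB : Tendsto (fun z : ℝ => 3*γ*((c + 1/z)*(c + 2/z))) atTop
        (nhds (3*γ*(c*c))) := (h1.mul h2).const_mul _
    have hC : Tendsto (fun z : ℝ => 6*c*(1/z)^(2:ℕ)) atTop (nhds (6*c*0^(2:ℕ))) :=
      (hz.pow 2).const_mul _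
    have hD : Tendsto (fun z : ℝ => 18*(1/z)^(3:ℕ)) atTop (nhds (18*0^(3:ℕ))) :=
      (hz.pow 3).const_mul _
    have := ((hA.add hB).add hC).add hD
    have heq : c*c*c + 3*γ*(c*c) + 6*c*0^(2:ℕ) + 18*0^(3:ℕ)
        = c^(3:ℕ) + 3*γ*c^(2:ℕ) := by ring
    rwa [heq] at this
  have hmain : ∀ᶠ z : ℝ in atTop,
      (c*z+1)*(c*z+2)*(c*z+3) + 3*(γ*z)*((c*z+1)*(c*z+2)) + 6*(c*z+1) + 12
        ≤ 6*z^(3:ℕ) := by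
    have hev := hratio.eventually_lt_const hlim
    filter_upwards [hev, eventually_ge_atTop (1:ℝ)] with z hz hz1
    have hz0 : (0:ℝ) < z := by linarith
    have hexp : (c + 1/z)*(c + 2/z)*(c + 3/z) + 3*γ*((c + 1/z)*(c + 2/z))
        + 6*c*(1/z)^(2:ℕ) + 18*(1/z)^(3:ℕ)
        = ((c*z+1)*(c*z+2)*(c*z+3) + 3*(γ*z)*((c*z+1)*(c*z+2)) + 6*(c*z+1) + 12) / z^(3:ℕ) := by
      field_simp
      ring
    rw [hexp, div_lt_iff₀ (by positivity)] at hz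
    nlinarith [hz]
  have hcomp := yf_tendsto.eventually hmain
  filter_upwards [hcomp, eventually_ge_atTop 1] with n hn hn1
  -- cast
  have hy0 : 0 ≤ yf n := le_of_lt (yf_pos hn1)
  have hw : ((⌊γ * yf n⌋₊ : ℕ) : ℝ) ≤ γ * yf n := Nat.floor_le (by positivity)
  have hcast : ((q*⌊γ * yf n⌋₊+1)*(q*⌊γ * yf n⌋₊+2)*(q*⌊γ * yf n⌋₊+3)
        + 3*⌊γ * yf n⌋₊*(q*⌊γ * yf n⌋₊+1)*(q*⌊γ * yf n⌋₊+2)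
        + 6*(q*⌊γ * yf n⌋₊+1) + 12 : ℕ) ≤ (6*n : ℕ) := by
    have hreal : (((q*⌊γ * yf n⌋₊+1)*(q*⌊γ * yf n⌋₊+2)*(q*⌊γ * yf n⌋₊+3)
        + 3*⌊γ * yf n⌋₊*(q*⌊γ * yf n⌋₊+1)*(q*⌊γ * yf n⌋₊+2)
        + 6*(q*⌊γ * yf n⌋₊+1) + 12 : ℕ) : ℝ) ≤ ((6*n : ℕ) : ℝ) := by
      push_cast
      have h1 : ((q:ℝ)*(⌊γ * yf n⌋₊:ℝ)+1) ≤ c * yf n + 1 := by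
        rw [hc]
        have := mul_le_mul_of_nonneg_left hw (le_of_lt hqR)
        nlinarith
      have h2 : ((q:ℝ)*(⌊γ * yf n⌋₊:ℝ)+2) ≤ c * yf n + 2 := by
        rw [hc]
        have := mul_le_mul_of_nonneg_left hw (le_of_lt hqR)
        nlinarith
      have h3 : ((q:ℝ)*(⌊γ * yf n⌋₊:ℝ)+3) ≤ c * yf n + 3 := by
        rw [hc]
        have := mul_le_mul_of_nonneg_left hw (le_of_lt hqR)
        nlinarith
      have hwpos : (0:ℝ) ≤ (⌊γ * yf n⌋₊:ℝ) := by positivity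
      have hg : (3:ℝ)*(⌊γ * yf n⌋₊:ℝ) ≤ 3*(γ * yf n) := by linarith
      have hfin := hn
      -- combine monotonic products
      have t1 : ((q:ℝ)*(⌊γ * yf n⌋₊:ℝ)+1)*((q:ℝ)*(⌊γ * yf n⌋₊:ℝ)+2)*((q:ℝ)*(⌊γ * yf n⌋₊:ℝ)+3)
          ≤ (c*yf n+1)*(c*yf n+2)*(c*yf n+3) := by
        apply mul_le_mul (mul_le_mul h1 h2 (by positivity) (by positivity)) h3 (by positivity)
        positivity
      have t2 : (3:ℝ)*(⌊γ * yf n⌋₊:ℝ)*(((q:ℝ)*(⌊γ * yf n⌋₊:ℝ)+1)*(((q:ℝ)*(⌊γ * yf n⌋₊:ℝ)+2)))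
          ≤ 3*(γ*yf n)*((c*yf n+1)*(c*yf n+2)) := by
        apply mul_le_mul hg (mul_le_mul h1 h2 (by positivity) (by positivity)) (by positivity)
        positivity
      have t3 : (6:ℝ)*((q:ℝ)*(⌊γ * yf n⌋₊:ℝ)+1) ≤ 6*(c*yf n+1) := by linarith
      have hnn : (6:ℝ)*(yf n)^(3:ℕ) = 6*(n:ℝ) := by rw [yf_cube]
      nlinarith [t1, t2, t3, hfin, hnn]
    exact_mod_cast hreal
  exact hcast

end Aux

theorem stmt15 (a : ℝ) (ha0 : 0 < a) (ha : a < (6 : ℝ) ^ ((1 : ℝ) / 3)) :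
    a / 3 ≤
      Filter.liminf
        (fun n : ℕ => Real.log (wilfCount n) / ((n : ℝ) ^ ((1 : ℝ) / 3) * Real.log n))
        Filter.atTop := by
  obtain ⟨q, γ, hq1, hγ0, haqγ, h6⟩ := exists_params a ha0 ha
  have hqR : (0:ℝ) < (q:ℝ) := by exact_mod_cast hq1
  set g : ℕ → ℝ := fun n : ℕ => Real.log (wilfCount n) / (yf n * Real.log n) with hgdef
  have hynn : ∀ n : ℕ, 0 ≤ yf n := fun n => Real.rpow_nonneg (Nat.cast_nonneg n) _
  set δ : ℝ := ((q:ℝ)*γ - a)/(2*q) with hδdef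
  have hδ0 : 0 < δ := div_pos (by linarith) (by positivity)
  have hδγ : δ < γ := by
    rw [hδdef, div_lt_iff₀ (by positivity)]
    nlinarith [mul_pos hqR hγ0]
  set L : ℝ := (q:ℝ)*(γ - δ)*(1/3) with hLdef
  have hLeq : L = ((q:ℝ)*γ + a)/6 := by
    rw [hLdef, hδdef]; field_simp; ring
  have hL : a/3 < L := by rw [hLeq]; linarith
  set w : ℕ → ℕ := fun n => ⌊γ * yf n⌋₊ with hwdef
  set m : ℕ → ℕ := fun n => ⌊δ * yf n⌋₊ with hmdef
  have hmw : ∀ n, m n ≤ w n := fun n =>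
    Nat.floor_mono (mul_le_mul_of_nonneg_right hδγ.le (hynn n))
  -- lower bound on wilfCount
  have hWilfGE : ∀ᶠ n in atTop, (m n)^(q*(w n - m n)) ≤ wilfCount n := by
    filter_upwards [clubs q γ hq1 hγ0 h6, floor_ge_one γ hγ0] with n hclub hw1
    have h1 : (w n).factorial ^ q ≤ wilfCount n :=
      wilf_ge_perm n q (w n) hw1 hq1 hclub
    calc (m n)^(q*(w n - m n)) = ((m n)^(w n - m n))^q := by
          rw [← pow_mul, Nat.mul_comm]
      _ ≤ (w n).factorial ^ q :=
          Nat.pow_le_pow_left (pow_sub_le_factorial _ _ (hmw n)) q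
      _ ≤ wilfCount n := h1
  have hg_low : ∀ᶠ n in atTop,
      (q:ℝ)*((w n:ℝ) - (m n:ℝ)) * Real.log (m n) ≤ Real.log (wilfCount n) := by
    filter_upwards [hWilfGE, floor_ge_one δ hδ0] with n hge hm1
    have hmpos : 0 < (m n)^(q*(w n - m n)) := pow_pos hm1 _
    have hx : (0:ℝ) < (((m n)^(q*(w n - m n)) : ℕ) : ℝ) := by exact_mod_cast hmpos
    have hxy : (((m n)^(q*(w n - m n)) : ℕ) : ℝ) ≤ ((wilfCount n : ℕ) : ℝ) := by
      exact_mod_cast hge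
    have hlog := Real.log_le_log hx hxy
    have hcast : (((m n)^(q*(w n - m n)) : ℕ) : ℝ) = ((m n : ℝ))^(q*(w n - m n)) := by
      push_cast; ring
    rw [hcast, Real.log_pow] at hlog
    have hexp : ((q*(w n - m n) : ℕ) : ℝ) = (q:ℝ)*((w n:ℝ) - (m n:ℝ)) := by
      push_cast [Nat.cast_sub (hmw n)]; ring
    rw [hexp] at hlog
    exact hlog
  -- tendsto of lower envelope
  set h : ℕ → ℝ := fun n =>
    (q:ℝ)*((w n:ℝ) - (m n:ℝ)) * Real.log (m n) / (yf n * Real.log n) with hhdef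
  have hTend : Tendsto h atTop (nhds L) := by
    have hbase : Tendsto (fun n : ℕ =>
        (q:ℝ)*(((w n:ℝ)/yf n) - ((m n:ℝ)/yf n)) * (Real.log (m n)/Real.log n))
        atTop (nhds ((q:ℝ)*(γ - δ)*(1/3))) := by
      exact (((floor_ratio γ hγ0).sub (floor_ratio δ hδ0)).const_mul _).mul
        (log_floor_ratio δ hδ0)
    rw [hLdef]
    apply hbase.congr'
    filter_upwards [eventually_ge_atTop 2] with n hn2
    have hy0 : 0 < yf n := yf_pos (by omega)
    have hlogn0 : Real.log n ≠ 0 := by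
      have : (1:ℝ) < (n:ℝ) := by exact_mod_cast (by omega : 1 < n)
      exact ne_of_gt (Real.log_pos this)
    rw [hhdef]
    field_simp
  have hEv1 : ∀ᶠ n in atTop, a/3 < h n := hTend.eventually_const_lt hL
  have hEv2 : ∀ᶠ n in atTop, h n ≤ g n := by
    filter_upwards [hg_low, eventually_ge_atTop 2] with n hlow hn2
    have hy0 : 0 < yf n := yf_pos (by omega)
    have hlogn0 : 0 < Real.log n := by
      have : (1:ℝ) < (n:ℝ) := by exact_mod_cast (by omega : 1 < n)
      exact Real.log_pos this
    rw [hhdef, hgdef]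
    exact div_le_div_of_nonneg_right hlow (by positivity)
  have hEvg : ∀ᶠ n in atTop, a/3 ≤ g n := by
    filter_upwards [hEv1, hEv2] with n h1 h2
    linarith
  -- upper bound / coboundedness
  set c16 : ℝ := (16:ℝ) ^ ((1:ℝ)/3) with hc16def
  have hc16pos : 0 < c16 := Real.rpow_pos_of_pos (by norm_num) _
  have hc16cube : c16 ^ (3:ℕ) = 16 := by
    rw [hc16def, ← Real.rpow_natCast ((16:ℝ) ^ ((1:ℝ)/3)) 3,
      ← Real.rpow_mul (by norm_num)]
    norm_num
  have hc16lt3 : c16 < 3 := by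
    by_contra hcon
    push_neg at hcon
    have : (3:ℝ)^(3:ℕ) ≤ c16^(3:ℕ) := pow_le_pow_left₀ (by norm_num) hcon _
    rw [hc16cube] at this
    norm_num at this
  set Ku : ℕ → ℕ := fun n => ⌊c16 * yf n⌋₊ with hKudef
  have hKuprop : ∀ n : ℕ, 1 ≤ n → ∀ k : ℕ, k ^ 3 ≤ 16 * n → k ≤ Ku n := by
    intro n hn k hk
    have hy0 : 0 < yf n := yf_pos hn
    apply Nat.le_floor
    by_contra hcon
    push_neg at hcon
    have hk3 : (c16 * yf n)^(3:ℕ) < (k:ℝ)^(3:ℕ) :=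
      pow_lt_pow_left₀ hcon (by positivity) (by norm_num)
    have hval : (c16 * yf n)^(3:ℕ) = 16 * (n:ℝ) := by
      rw [mul_pow, hc16cube, yf_cube]
    have hkr : ((k:ℝ))^(3:ℕ) ≤ 16 * (n:ℝ) := by exact_mod_cast hk
    rw [hval] at hk3
    linarith
  have hKu_le_n : ∀ᶠ n : ℕ in atTop, Ku n ≤ n := by
    filter_upwards [yf_tendsto.eventually_ge_atTop (max 1 c16), eventually_ge_atTop 1]
      with n hy hn1
    have hy1 : 1 ≤ yf n := le_trans (le_max_left _ _) hy
    have hyc : c16 ≤ yf n := le_trans (le_max_right _ _) hy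
    have : c16 * yf n ≤ (n:ℝ) := by
      have h1 : c16 * yf n ≤ yf n * yf n := by nlinarith
      have h2 : yf n * yf n ≤ yf n * yf n * yf n := by nlinarith
      have h3 : yf n * yf n * yf n = (n:ℝ) := by rw [← yf_cube (n := n)]; ring
      linarith
    calc Ku n ≤ ⌊(n:ℝ)⌋₊ := Nat.floor_mono this
      _ = n := Nat.floor_natCast n
  have hWilf1 : ∀ᶠ n in atTop, 1 ≤ wilfCount n := by
    filter_upwards [hWilfGE, floor_ge_one δ hδ0] with n hge hm1
    exact le_trans ((pow_pos hm1 (q*(w n - m n)) : 0 < (m n)^(q*(w n - m n)))) hge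
  set U : ℕ → ℝ := fun n =>
    (Real.log ((n:ℝ)+1)/Real.log n) * (1/yf n)
      + ((Ku n:ℝ)/yf n) * (2*(Real.log ((n:ℝ)+1)/Real.log n)) with hUdef
  have hgU : ∀ᶠ n in atTop, g n ≤ U n := by
    filter_upwards [hKu_le_n, hWilf1, eventually_ge_atTop 2] with n hKn hW1 hn2
    have hn1 : 1 ≤ n := by omega
    have hy0 : 0 < yf n := yf_pos hn1
    have hlogn0 : 0 < Real.log n := by
      have : (1:ℝ) < (n:ℝ) := by exact_mod_cast (by omega : 1 < n)
      exact Real.log_pos this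
    have hup := wilf_upper n (Ku n) hn1 (hKuprop n hn1)
    have hWpos : (0:ℝ) < (wilfCount n : ℝ) := by exact_mod_cast hW1
    have hupR : (wilfCount n : ℝ) ≤ ((Ku n : ℝ) + 1) * ((n:ℝ)+1)^(2*(Ku n)) := by
      have : ((wilfCount n : ℕ) : ℝ) ≤ (((Ku n + 1) * ((n+1)^2) ^ Ku n : ℕ) : ℝ) := by
        exact_mod_cast hup
      calc (wilfCount n : ℝ) ≤ (((Ku n + 1) * ((n+1)^2) ^ Ku n : ℕ) : ℝ) := this
        _ = ((Ku n : ℝ) + 1) * ((n:ℝ)+1)^(2*(Ku n)) := by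
            push_cast
            rw [← pow_mul]
    have hlog1 := Real.log_le_log hWpos hupR
    rw [Real.log_mul (by positivity) (by positivity), Real.log_pow] at hlog1
    have hKlog : Real.log ((Ku n : ℝ) + 1) ≤ Real.log ((n:ℝ)+1) := by
      apply Real.log_le_log (by positivity)
      have : (Ku n : ℝ) ≤ (n:ℝ) := by exact_mod_cast hKn
      linarith
    have hnum : Real.log (wilfCount n)
        ≤ Real.log ((n:ℝ)+1) + (2*(Ku n):ℝ) * Real.log ((n:ℝ)+1) := by
      push_cast at hlog1 ⊢
      linarith
    simp only [hgdef, hUdef]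
    have hrewrite : (Real.log ((n:ℝ)+1)/Real.log n) * (1/yf n)
        + ((Ku n:ℝ)/yf n) * (2*(Real.log ((n:ℝ)+1)/Real.log n))
        = (Real.log ((n:ℝ)+1) + (2*(Ku n):ℝ) * Real.log ((n:ℝ)+1)) / (yf n * Real.log n) := by
      push_cast
      field_simp
    rw [hrewrite]
    exact div_le_div_of_nonneg_right hnum (by positivity)
  have hinvy : Tendsto (fun n : ℕ => 1/yf n) atTop (nhds 0) :=
    tendsto_const_nhds.div_atTop yf_tendsto
  have hUlim : Tendsto U atTop (nhds (1*0 + c16*(2*1))) := by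
    rw [hUdef]
    exact (log_succ_ratio.mul hinvy).add
      ((floor_ratio c16 hc16pos).mul (log_succ_ratio.const_mul 2))
  have hU6 : ∀ᶠ n in atTop, U n < 6 := by
    apply hUlim.eventually_lt_const
    nlinarith
  have hgB : ∀ᶠ n in atTop, g n ≤ 6 := by
    filter_upwards [hgU, hU6] with n h1 h2
    linarith
  have hcob : IsCoboundedUnder (fun x1 x2 => x1 ≥ x2) atTop g :=
    isCoboundedUnder_ge_of_eventually_le atTop hgB
  exact le_liminf_of_le hcob hEvg
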